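/- Pauli-subset locking requires an exponentially large key: suppose E(x, (u,v)) = σ_x^u σ_z^v |x⟩ is an ε-locking scheme for n-bit messages where the key (U,V) is uniform on a set S ⊆ {0,1}^{2n}. Then |S| ≥ (1−ε)·2^n. -/

import Mathlib

open Matrix
open scoped BigOperators ComplexOrder

/-- The Pauli operator `σ_x^u σ_z^v` on `(ℂ²)^{⊗n}`, acting on computational basis
states by `σ_x^u σ_z^v |x⟩ = (−1)^{v·x} |x + u⟩`. -/
noncomputable def pauliXZ (n : ℕ) (u v : Fin n → Fin 2) :
    Matrix (Fin n → Fin 2) (Fin n → Fin 2) ℂ :=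
  fun i x => if i = x + u then (-1 : ℂ) ^ (∑ j, (v j : ℕ) * (x j : ℕ)) else 0

/-- The Pauli encoding `E(x, (u,v)) = σ_x^u σ_z^v |x⟩⟨x| (σ_x^u σ_z^v)†`. -/
noncomputable def pauliEnc (n : ℕ) (x : Fin n → Fin 2) (k : (Fin n → Fin 2) × (Fin n → Fin 2)) :
    Matrix (Fin n → Fin 2) (Fin n → Fin 2) ℂ :=
  pauliXZ n k.1 k.2 * Matrix.single x x (1 : ℂ) * (pauliXZ n k.1 k.2)ᴴ

/-- The joint probability `P(I = i, X = x)` for `X` uniform on `{0,1}^n`, the key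
uniform on `S` and independent of `X`, and the POVM `{M_i}` measured on `E(X, K)`. -/
noncomputable def pauliProb (n : ℕ) (S : Finset ((Fin n → Fin 2) × (Fin n → Fin 2)))
    (m : ℕ) (M : Fin m → Matrix (Fin n → Fin 2) (Fin n → Fin 2) ℂ)
    (i : Fin m) (x : Fin n → Fin 2) : ℝ :=
  (1 / (((2 : ℝ) ^ n) * S.card)) * ∑ k ∈ S, ((M i * pauliEnc n x k).trace).re


lemma fin2_add_self (a : Fin 2) : a + a = 0 := by omega

lemma vec_add_add (n : ℕ) (x u : Fin n → Fin 2) : x + u + u = x := by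
  funext j; simp [add_assoc, fin2_add_self]

lemma vec_eq_iff (n : ℕ) (j x u : Fin n → Fin 2) : j = x + u ↔ x = j + u := by
  constructor <;> (rintro rfl; rw [vec_add_add])

lemma stdBasis_diag (n : ℕ) (j : Fin n → Fin 2) :
    Matrix.single j j (1:ℂ) = Matrix.diagonal (fun a => if a = j then 1 else 0) := by
  ext a b
  simp only [Matrix.single, Matrix.diagonal, Matrix.of_apply]
  by_cases h1 : a = b <;> by_cases h2 : j = a <;> aesop

lemma trace_calc (n : ℕ) (j x : Fin n → Fin 2) (k : (Fin n → Fin 2) × (Fin n → Fin 2)) :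
    ((Matrix.single j j (1:ℂ) * pauliEnc n x k).trace).re
      = if j = x + k.1 then 1 else 0 := by
  have h : (Matrix.single j j (1:ℂ) * pauliEnc n x k).trace = pauliEnc n x k j j := by
    simp [Matrix.trace, Matrix.diag, Matrix.mul_apply, Matrix.single,
      Finset.sum_ite_eq, ite_and]
  rw [h]
  have h2 : pauliEnc n x k j j
      = (pauliXZ n k.1 k.2 j x) * star (pauliXZ n k.1 k.2 j x) := by
    simp [pauliEnc, Matrix.mul_apply, Matrix.single, Matrix.conjTranspose_apply,
      ite_and, mul_ite, ite_mul, zero_mul, mul_zero, mul_one,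
      Finset.sum_ite_eq, Finset.sum_ite_eq']
  rw [h2]
  have h3 : (-1 : ℂ) ^ (∑ j, (k.2 j : ℕ) * (x j : ℕ))
      = (((-1 : ℝ) ^ (∑ j, (k.2 j : ℕ) * (x j : ℕ)) : ℝ) : ℂ) := by push_cast; ring
  simp only [pauliXZ]
  split_ifs with hc
  · rw [h3]; simp [← mul_pow]
  · simp

/-- Pauli-subset locking requires an exponentially large key: suppose
`E(x, (u,v)) = σ_x^u σ_z^v |x⟩` is an `ε`-locking scheme for `n`-bit messages where the
key `(U,V)` is uniform on a set `S ⊆ {0,1}^{2n}`.  Then `|S| ≥ (1−ε)·2^n`. -/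
theorem stmt19 (n : ℕ) (ε : ℝ) (hε : 0 ≤ ε) (hε1 : ε ≤ 1)
    (S : Finset ((Fin n → Fin 2) × (Fin n → Fin 2))) (hS : S.Nonempty)
    (hlock : ∀ (m : ℕ) (M : Fin m → Matrix (Fin n → Fin 2) (Fin n → Fin 2) ℂ),
      (∀ i, (M i).PosSemidef) → (∑ i, M i = 1) →
      ∀ i : Fin m, 0 < ∑ x : Fin n → Fin 2, pauliProb n S m M i x →
        (1 / 2) * ∑ x : Fin n → Fin 2,
            |pauliProb n S m M i x / (∑ x', pauliProb n S m M i x')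
              - 1 / (2 : ℝ) ^ n| ≤ ε) :
    (1 - ε) * (2 : ℝ) ^ n ≤ S.card := by
  
  classical
  have h2n : (0:ℝ) < (2:ℝ) ^ n := by positivity
  have hScard : (0:ℝ) < (S.card : ℝ) := by exact_mod_cast Finset.card_pos.mpr hS
  have hcardeq : Fintype.card (Fin n → Fin 2) = 2 ^ n := by simp [Fintype.card_fun]
  have e : Fin (2 ^ n) ≃ (Fin n → Fin 2) := (Fintype.equivFinOfCardEq hcardeq).symm
  set M : Fin (2 ^ n) → Matrix (Fin n → Fin 2) (Fin n → Fin 2) ℂ :=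
    fun i => Matrix.single (e i) (e i) 1 with hM
  have hpsd : ∀ i, (M i).PosSemidef := by
    intro i
    show (Matrix.single (e i) (e i) (1:ℂ)).PosSemidef
    rw [stdBasis_diag]
    exact Matrix.PosSemidef.diagonal (by
      intro a
      dsimp
      split_ifs <;> simp)
  have hsum : ∑ i, M i = 1 := by
    show ∑ i, Matrix.single (e i) (e i) (1:ℂ) = 1
    rw [Equiv.sum_comp e (fun x => Matrix.single x x (1:ℂ))]
    ext a b
    simp [Matrix.sum_apply, Matrix.single, ite_and, Finset.sum_ite_eq,
      Matrix.one_apply, eq_comm]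
  have hn0 : 0 < 2 ^ n := Nat.pow_pos (by norm_num)
  set i0 : Fin (2 ^ n) := ⟨0, hn0⟩ with hi0
  set j : Fin n → Fin 2 := e i0 with hj
  set c : ℝ := 1 / (((2 : ℝ) ^ n) * S.card) with hc
  have hcpos : 0 < c := by rw [hc]; positivity
  set f : (Fin n → Fin 2) → ℝ :=
    fun x => ∑ k ∈ S, (if j = x + k.1 then (1:ℝ) else 0) with hf
  have hprob : ∀ x, pauliProb n S (2^n) M i0 x = c * f x := by
    intro x
    rw [pauliProb, hf]
    congr 1
    exact Finset.sum_congr rfl (fun k _ => trace_calc n j x k)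
  have hfnonneg : ∀ x, 0 ≤ f x := by
    intro x; apply Finset.sum_nonneg; intro k _; split_ifs <;> norm_num
  have hfsum : ∑ x : Fin n → Fin 2, f x = S.card := by
    rw [hf]
    rw [Finset.sum_comm]
    have h1 : ∀ k ∈ S, (∑ x : Fin n → Fin 2, if j = x + k.1 then (1:ℝ) else 0) = 1 := by
      intro k _
      have h2 : ∀ x : Fin n → Fin 2, (j = x + k.1) ↔ (x = j + k.1) :=
        fun x => vec_eq_iff n j x k.1
      simp only [h2]
      rw [Finset.sum_ite_eq' Finset.univ (j + k.1) (fun _ => (1:ℝ))]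
      simp
    rw [Finset.sum_congr rfl h1, Finset.sum_const, nsmul_eq_mul, mul_one]
  have hsump : ∑ x : Fin n → Fin 2, pauliProb n S (2^n) M i0 x = c * S.card := by
    simp only [hprob, ← Finset.mul_sum, hfsum]
  have hpos : 0 < ∑ x : Fin n → Fin 2, pauliProb n S (2^n) M i0 x := by
    rw [hsump]; exact mul_pos hcpos hScard
  have key := hlock (2^n) M hpsd hsum i0 hpos
  set q : ℝ := 1 / (2:ℝ)^n with hq
  have hq0 : 0 ≤ q := by rw [hq]; positivity
  have hq2 : (2:ℝ)^n * q = 1 := by rw [hq]; field_simp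
  have hratio : ∀ x, pauliProb n S (2^n) M i0 x / (∑ x', pauliProb n S (2^n) M i0 x')
      = f x / S.card := by
    intro x
    rw [hprob, hsump, mul_div_mul_left _ _ (ne_of_gt hcpos)]
  rw [Finset.sum_congr rfl (fun x _ => by rw [hratio x])] at key
  set T : Finset (Fin n → Fin 2) := Finset.univ.filter (fun x => f x ≠ 0) with hT
  have hTcard : (T.card : ℝ) ≤ S.card := by
    have hsub : T ⊆ S.image (fun k => j + k.1) := by
      intro x hx
      rw [hT, Finset.mem_filter] at hx
      obtain ⟨k, hk, hke⟩ : ∃ k ∈ S, j = x + k.1 := by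
        by_contra hcon
        push_neg at hcon
        exact hx.2 (Finset.sum_eq_zero (fun k hk => by simp [hcon k hk]))
      exact Finset.mem_image.mpr ⟨k, hk, ((vec_eq_iff n j x k.1).mp hke).symm⟩
    exact_mod_cast le_trans (Finset.card_le_card hsub) (Finset.card_image_le)
  set g : (Fin n → Fin 2) → ℝ := fun x => f x / S.card with hg
  have hgsum : ∑ x : Fin n → Fin 2, g x = 1 := by
    rw [hg, ← Finset.sum_div, hfsum, div_self (ne_of_gt hScard)]
  have hgT : ∑ x ∈ T, g x = 1 := by
    rw [← hgsum]
    apply Finset.sum_subset (Finset.subset_univ T)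
    intro x _ hx
    rw [hT, Finset.mem_filter] at hx
    push_neg at hx
    have hfx : f x = 0 := hx (Finset.mem_univ x)
    simp [hg, hfx]
  have hgTc : ∑ x ∈ Tᶜ, g x = 0 := by
    apply Finset.sum_eq_zero
    intro x hx
    rw [Finset.mem_compl, hT, Finset.mem_filter] at hx
    push_neg at hx
    have hfx : f x = 0 := hx (Finset.mem_univ x)
    simp [hg, hfx]
  have hsplit : ∑ x ∈ T, |g x - q| + ∑ x ∈ Tᶜ, |g x - q|
      = ∑ x : Fin n → Fin 2, |g x - q| := Finset.sum_add_sum_compl T _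
  have hbound1 : ∑ x ∈ T, (g x - q) ≤ ∑ x ∈ T, |g x - q| :=
    Finset.sum_le_sum (fun x _ => le_abs_self _)
  have hbound2 : ∑ x ∈ Tᶜ, (q - g x) ≤ ∑ x ∈ Tᶜ, |g x - q| :=
    Finset.sum_le_sum (fun x _ => by rw [abs_sub_comm]; exact le_abs_self _)
  have hqT : ∑ _x ∈ T, (q : ℝ) = T.card * q := by rw [Finset.sum_const, nsmul_eq_mul]
  have hqTc : ∑ _x ∈ Tᶜ, (q : ℝ) = ((2:ℝ)^n - T.card) * q := by
    rw [Finset.sum_const, nsmul_eq_mul, Finset.card_compl, hcardeq]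
    have hle : T.card ≤ 2 ^ n := by rw [← hcardeq]; exact Finset.card_le_univ T
    push_cast [Nat.cast_sub hle]
    ring
  have e1 : ∑ x ∈ T, (g x - q) = 1 - T.card * q := by
    rw [Finset.sum_sub_distrib, hgT, hqT]
  have e2 : ∑ x ∈ Tᶜ, (q - g x) = ((2:ℝ)^n - T.card) * q := by
    rw [Finset.sum_sub_distrib, hgTc, hqTc]; ring
  have hTq : (T.card : ℝ) * q ≤ S.card * q := mul_le_mul_of_nonneg_right hTcard hq0
  have hTV : 2 * (1 - (S.card : ℝ) * q) ≤ ∑ x : Fin n → Fin 2, |g x - q| := by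
    rw [← hsplit]
    nlinarith [hbound1, hbound2, e1, e2, hTq, hq2]
  have hfinal : 1 - (S.card : ℝ) * q ≤ ε := by linarith [key, hTV]
  nlinarith [mul_le_mul_of_nonneg_right hfinal (le_of_lt h2n), hq2, hScard, h2n]
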